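/- More generally, for every formal power series f(w) ∈ ℂ[[w]] of the form f(w) = w + (higher order terms), there exists a unique sequence of complex numbers (A_j)_{j≥1} such that exp(Σ_{j≥1} A_j w^{j+1} d/dw)·w = f(w) as formal power series. -/

import Mathlib

open PowerSeries Complex Real

/-- The derivation `D = ∑_{j ≥ 1} A_j w^{j+1} d/dw` on `ℂ[[w]]`,
realized as `f ↦ g · f'` where `g = ∑_{j ≥ 1} A_j w^{j+1}`. -/
noncomputable def vfDeriv (A : ℕ → ℂ) (f : PowerSeries ℂ) : PowerSeries ℂ :=
  (PowerSeries.mk fun n => if 2 ≤ n then A (n - 1) else 0) * f.derivativeFun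

/-- `exp(D) = ∑_{n ≥ 0} D^n / n!` applied to `f`, defined coefficientwise; this is
well defined since `D` strictly raises the `w`-adic order, so only finitely many
terms contribute to each coefficient. -/
noncomputable def expDeriv (A : ℕ → ℂ) (f : PowerSeries ℂ) : PowerSeries ℂ :=
  PowerSeries.mk fun k =>
    ∑ n ∈ Finset.range (k + 2), ((n.factorial : ℂ))⁻¹ * PowerSeries.coeff k ((vfDeriv A)^[n] f)

/-- The series `(1/(2πi)) log(1 + 2πi·w) = ∑_{n ≥ 1} (-1)^{n+1} (2πi)^{n-1} w^n / n`. -/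
noncomputable def logSeries : PowerSeries ℂ :=
  PowerSeries.mk fun n => if n = 0 then 0 else (-1) ^ (n + 1) * (2 * π * I) ^ (n - 1) / n


lemma coeff_vfDeriv (A : ℕ → ℂ) (f : PowerSeries ℂ) (k : ℕ) :
    PowerSeries.coeff k (vfDeriv A f) =
      ∑ p ∈ Finset.HasAntidiagonal.antidiagonal k,
        (if 2 ≤ p.1 then A (p.1 - 1) else 0) *
          (PowerSeries.coeff (p.2 + 1) f * (p.2 + 1)) := by
  rw [vfDeriv, PowerSeries.coeff_mul]
  refine Finset.sum_congr rfl fun p _ => ?_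
  rw [PowerSeries.coeff_mk]; erw [PowerSeries.coeff_derivativeFun]

lemma derivativeFun_X : (PowerSeries.X : PowerSeries ℂ).derivativeFun = 1 := by
  ext n
  erw [PowerSeries.coeff_derivativeFun]
  rcases n with _|n
  · simp
  · rw [PowerSeries.coeff_X, PowerSeries.coeff_one]
    simp

lemma vfDeriv_X (A : ℕ → ℂ) :
    vfDeriv A PowerSeries.X = PowerSeries.mk fun n => if 2 ≤ n then A (n - 1) else 0 := by
  rw [vfDeriv, derivativeFun_X, mul_one]

lemma coeff_vfDeriv_X (A : ℕ → ℂ) (k : ℕ) :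
    PowerSeries.coeff k (vfDeriv A PowerSeries.X) = if 2 ≤ k then A (k - 1) else 0 := by
  rw [vfDeriv_X, PowerSeries.coeff_mk]

/-- vfDeriv raises order. -/
lemma coeff_vfDeriv_eq_zero {A : ℕ → ℂ} {f : PowerSeries ℂ} {m : ℕ}
    (hf : ∀ j < m, PowerSeries.coeff j f = 0) :
    ∀ j < m + 1, PowerSeries.coeff j (vfDeriv A f) = 0 := by
  intro j hj
  rw [coeff_vfDeriv]
  refine Finset.sum_eq_zero fun p hp => ?_
  rw [Finset.HasAntidiagonal.mem_antidiagonal] at hp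
  by_cases h2 : 2 ≤ p.1
  · rw [if_pos h2, hf (p.2 + 1) (by omega), zero_mul, mul_zero]
  · rw [if_neg h2, zero_mul]

lemma coeff_iter_eq_zero (A : ℕ → ℂ) (n : ℕ) :
    ∀ j ≤ n, PowerSeries.coeff j ((vfDeriv A)^[n] PowerSeries.X) = 0 := by
  induction n with
  | zero => intro j hj; interval_cases j; simp
  | succ n ih =>
      intro j hj
      rw [Function.iterate_succ_apply']
      exact coeff_vfDeriv_eq_zero (m := n + 1) (fun i hi => ih i (by omega)) j (by omega)

/-- Locality: the `k`-th coefficient of `D^[n] X` depends only on `A i` for `i + n ≤ k`. -/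
lemma coeff_iter_congr {A B : ℕ → ℂ} (n : ℕ) :
    ∀ k : ℕ, (∀ i, 1 ≤ i → i + n ≤ k → A i = B i) →
      PowerSeries.coeff k ((vfDeriv A)^[n] PowerSeries.X) =
      PowerSeries.coeff k ((vfDeriv B)^[n] PowerSeries.X) := by
  induction n with
  | zero => intro k _; rfl
  | succ n ih =>
      intro k hAB
      rw [Function.iterate_succ_apply', Function.iterate_succ_apply',
        coeff_vfDeriv, coeff_vfDeriv]
      refine Finset.sum_congr rfl fun p hp => ?_
      rw [Finset.HasAntidiagonal.mem_antidiagonal] at hp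
      by_cases h2 : 2 ≤ p.1
      · rw [if_pos h2, if_pos h2]
        by_cases ho : p.2 + 1 ≤ n
        · rw [coeff_iter_eq_zero A n _ ho, coeff_iter_eq_zero B n _ ho,
            zero_mul, mul_zero, mul_zero]
        · have hA : A (p.1 - 1) = B (p.1 - 1) := hAB _ (by omega) (by omega)
          have hc : PowerSeries.coeff (p.2 + 1) ((vfDeriv A)^[n] PowerSeries.X) =
              PowerSeries.coeff (p.2 + 1) ((vfDeriv B)^[n] PowerSeries.X) :=
            ih (p.2 + 1) (fun i hi hin => hAB i hi (by omega))
          rw [hA, hc]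
      · rw [if_neg h2, if_neg h2, zero_mul, zero_mul]

lemma coeff_expDeriv_X (A : ℕ → ℂ) (k : ℕ) (hk : 2 ≤ k) :
    PowerSeries.coeff k (expDeriv A PowerSeries.X) =
      A (k - 1) + ∑ n ∈ Finset.Ico 2 k,
        ((n.factorial : ℂ))⁻¹ * PowerSeries.coeff k ((vfDeriv A)^[n] PowerSeries.X) := by
  rw [expDeriv, PowerSeries.coeff_mk]
  rw [← Finset.sum_subset (Finset.range_subset_range.mpr (by omega : k ≤ k + 2))
    (fun n _ hn => by
      rw [coeff_iter_eq_zero A n k (by simp at hn ⊢; omega), mul_zero])]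
  rw [Finset.range_eq_Ico, ← Finset.sum_Ico_consecutive _ (by omega : 0 ≤ 2) (by omega : 2 ≤ k)]
  have h01 : ∑ n ∈ Finset.Ico 0 2,
      ((n.factorial : ℂ))⁻¹ * PowerSeries.coeff k ((vfDeriv A)^[n] PowerSeries.X)
      = A (k - 1) := by
    rw [show Finset.Ico 0 2 = {0, 1} by rfl]
    rw [Finset.sum_insert (by simp), Finset.sum_singleton]
    simp only [Function.iterate_zero_apply, Function.iterate_one, Nat.factorial]
    rw [PowerSeries.coeff_X, if_neg (by omega), coeff_vfDeriv_X, if_pos hk]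
    simp
  rw [h01]

lemma coeff_expDeriv_X_zero (A : ℕ → ℂ) :
    PowerSeries.coeff 0 (expDeriv A PowerSeries.X) = 0 := by
  rw [expDeriv, PowerSeries.coeff_mk]
  refine Finset.sum_eq_zero fun n hn => ?_
  simp only [Finset.mem_range] at hn
  interval_cases n
  · simp
  · simp only [Function.iterate_one]
    rw [coeff_vfDeriv_X, if_neg (by omega), mul_zero]

lemma coeff_expDeriv_X_one (A : ℕ → ℂ) :
    PowerSeries.coeff 1 (expDeriv A PowerSeries.X) = 1 := by
  rw [expDeriv, PowerSeries.coeff_mk]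
  rw [show Finset.range 3 = {0, 1, 2} by rfl]
  rw [Finset.sum_insert (by simp), Finset.sum_insert (by simp), Finset.sum_singleton]
  rw [coeff_iter_eq_zero A 2 1 (by omega)]
  simp only [Function.iterate_zero_apply, Function.iterate_one]
  rw [coeff_vfDeriv_X, if_neg (by omega)]
  simp

/-- Uniqueness -/
lemma seq_unique {A B : ℕ → ℂ} (h0 : A 0 = B 0)
    (h : expDeriv A PowerSeries.X = expDeriv B PowerSeries.X) : A = B := by
  funext j
  induction j using Nat.strong_induction_on with
  | _ j ih =>
    rcases j with _|m
    · exact h0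
    · have hc := congrArg (PowerSeries.coeff (m + 2)) h
      rw [coeff_expDeriv_X A (m + 2) (by omega), coeff_expDeriv_X B (m + 2) (by omega)] at hc
      have hs : ∑ n ∈ Finset.Ico 2 (m + 2),
          ((n.factorial : ℂ))⁻¹ * PowerSeries.coeff (m + 2) ((vfDeriv A)^[n] PowerSeries.X)
          = ∑ n ∈ Finset.Ico 2 (m + 2),
          ((n.factorial : ℂ))⁻¹ * PowerSeries.coeff (m + 2) ((vfDeriv B)^[n] PowerSeries.X) := by
        refine Finset.sum_congr rfl fun n hn => ?_
        rw [Finset.mem_Ico] at hn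
        rw [coeff_iter_congr n (m + 2) (fun i hi hin => ih i (by omega))]
      rw [hs] at hc
      simpa using hc

/-- Existence: recursive construction. -/
noncomputable def seqA (f : PowerSeries ℂ) : ℕ → (ℕ → ℂ)
  | 0 => fun _ => 0
  | (m + 1) => Function.update (seqA f m) (m + 1)
      (PowerSeries.coeff (m + 2) f - ∑ n ∈ Finset.Ico 2 (m + 2),
        ((n.factorial : ℂ))⁻¹ *
          PowerSeries.coeff (m + 2) ((vfDeriv (seqA f m))^[n] PowerSeries.X))

noncomputable def mkA (f : PowerSeries ℂ) : ℕ → ℂ := fun j => seqA f j j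

lemma seqA_eq_mkA (f : PowerSeries ℂ) : ∀ m i, i ≤ m → seqA f m i = mkA f i := by
  intro m
  induction m with
  | zero => intro i hi; interval_cases i; rfl
  | succ m ih =>
      intro i hi
      rcases Nat.lt_or_ge i (m + 1) with h | h
      · rw [show seqA f (m + 1) i = seqA f m i by
          rw [seqA]; exact Function.update_of_ne (by omega) _ _]
        exact ih i (by omega)
      · have : i = m + 1 := by omega
        subst this; rfl

lemma mkA_zero (f : PowerSeries ℂ) : mkA f 0 = 0 := rfl

lemma expDeriv_mkA (f : PowerSeries ℂ) (h0 : PowerSeries.constantCoeff f = 0)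
    (h1 : PowerSeries.coeff 1 f = 1) : expDeriv (mkA f) PowerSeries.X = f := by
  ext k
  rcases k with _|_|m
  · rw [coeff_expDeriv_X_zero, ← PowerSeries.coeff_zero_eq_constantCoeff_apply] at *
    rw [h0]
  · rw [coeff_expDeriv_X_one, h1]
  · rw [coeff_expDeriv_X (mkA f) (m + 2) (by omega)]
    have hsum : ∑ n ∈ Finset.Ico 2 (m + 2),
        ((n.factorial : ℂ))⁻¹ * PowerSeries.coeff (m + 2) ((vfDeriv (mkA f))^[n] PowerSeries.X)
        = ∑ n ∈ Finset.Ico 2 (m + 2),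
        ((n.factorial : ℂ))⁻¹ *
          PowerSeries.coeff (m + 2) ((vfDeriv (seqA f m))^[n] PowerSeries.X) := by
      refine Finset.sum_congr rfl fun n hn => ?_
      rw [Finset.mem_Ico] at hn
      rw [coeff_iter_congr n (m + 2)
        (fun i hi hin => (seqA_eq_mkA f m i (by omega)).symm)]
    have hval : mkA f (m + 1) = PowerSeries.coeff (m + 2) f - ∑ n ∈ Finset.Ico 2 (m + 2),
        ((n.factorial : ℂ))⁻¹ *
          PowerSeries.coeff (m + 2) ((vfDeriv (seqA f m))^[n] PowerSeries.X) := by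
      show seqA f (m + 1) (m + 1) = _
      rw [seqA, Function.update_self]
    rw [show m + 2 - 1 = m + 1 by omega, hval, hsum]
    ring

/-- For every formal power series `f(w) = w + (higher order terms)` in `ℂ[[w]]`, there is a
unique sequence `(A_j)_{j ≥ 1}` with `exp(∑_{j≥1} A_j w^{j+1} d/dw) · w = f(w)`. -/
theorem exists_unique_seq_expDeriv_eq (f : PowerSeries ℂ)
    (h0 : PowerSeries.constantCoeff f = 0) (h1 : PowerSeries.coeff 1 f = 1) :
    ∃! A : ℕ → ℂ, A 0 = 0 ∧ expDeriv A PowerSeries.X = f := by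
  refine ⟨mkA f, ⟨mkA_zero f, expDeriv_mkA f h0 h1⟩, ?_⟩
  rintro B ⟨hB0, hBf⟩
  exact seq_unique (by rw [hB0, mkA_zero]) (by rw [hBf, expDeriv_mkA f h0 h1])
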